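/- Let L ≥ 0 and let F : ℝ → ℝ be twice continuously differentiable with |F''(x)| ≤ L for all x ∈ ℝ. Then for all real numbers a, b, c, writing m := (3/2)b − (1/2)c, one has F(a) − F(b) − F'(m)·(a − b) ≤ (L/4)·((a − b)² + (a − 2b + c)²) + (L/4)·(b − c)². -/

import Mathlib

open Set

lemma quad_bound (L : ℝ) (F : ℝ → ℝ) (hF : ContDiff ℝ 2 F)
    (hF'' : ∀ x : ℝ, |deriv (deriv F) x| ≤ L) (m x : ℝ) (hmx : m < x) :
    F x - F m - deriv F m * (x - m) ≤ L / 2 * (x - m) ^ 2 := by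
  have hud : UniqueDiffOn ℝ (Icc m x) := uniqueDiffOn_Icc hmx
  have hcd : ContDiffOn ℝ 1 F (Icc m x) := (hF.of_le (by norm_num)).contDiffOn
  have hd1 : ∀ y ∈ Icc m x, derivWithin F (Icc m x) y = deriv F y := fun y hy =>
    ((hF.differentiable (by norm_num)).differentiableAt).derivWithin (hud y hy)
  have hdF' : Differentiable ℝ (deriv F) := by
    have h2 : ContDiff ℝ (1 + 1) F := by exact_mod_cast hF
    exact (contDiff_succ_iff_deriv.mp h2).2.2.differentiable one_ne_zero
  have hdiff : DifferentiableOn ℝ (iteratedDerivWithin 1 F (Icc m x)) (Ioo m x) := by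
    intro y hy
    have hys : y ∈ Icc m x := Ioo_subset_Icc_self hy
    have hnhds : Icc m x ∈ nhds y := Icc_mem_nhds hy.1 hy.2
    have : iteratedDerivWithin 1 F (Icc m x) =ᶠ[nhds y] deriv F := by
      filter_upwards [hnhds] with z hz
      rw [iteratedDerivWithin_one, hd1 z hz]
    exact ((hdF' y).congr_of_eventuallyEq this).differentiableWithinAt
  obtain ⟨x', hx', heq⟩ := taylor_mean_remainder_lagrange hmx.ne (by rwa [uIcc_of_le hmx.le]) (by rwa [uIcc_of_le hmx.le, uIoo_of_le hmx.le])
  rw [uIoo_of_le hmx.le] at hx'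
  rw [uIcc_of_le hmx.le] at heq
  have h2 : iteratedDerivWithin 2 F (Icc m x) x' = deriv (deriv F) x' := by
    have hys : x' ∈ Icc m x := Ioo_subset_Icc_self hx'
    have hnhds : Icc m x ∈ nhds x' := Icc_mem_nhds hx'.1 hx'.2
    have hEq : iteratedDerivWithin 1 F (Icc m x) =ᶠ[nhds x'] deriv F := by
      filter_upwards [hnhds] with z hz
      rw [iteratedDerivWithin_one, hd1 z hz]
    rw [iteratedDerivWithin_succ,
      derivWithin_of_mem_nhds hnhds, hEq.deriv_eq]
  have htay : taylorWithinEval F 1 (Icc m x) m x = F m + deriv F m * (x - m) := by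
    rw [taylor_within_apply]
    simp [Finset.sum_range_succ, iteratedDerivWithin_one,
      hd1 m (left_mem_Icc.2 hmx.le)]
    ring
  rw [htay] at heq
  rw [h2] at heq
  norm_num at heq
  have hthis : F x - F m - deriv F m * (x - m) = deriv (deriv F) x' * (x - m) ^ 2 / 2 := by
    rw [← heq]; ring
  rw [hthis]
  have hb := (abs_le.mp (hF'' x')).2
  have hsq : (0:ℝ) ≤ (x - m)^2 := sq_nonneg _
  nlinarith [sq_nonneg (x-m)]

lemma quad_bound' (L : ℝ) (F : ℝ → ℝ) (hF : ContDiff ℝ 2 F)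
    (hF'' : ∀ x : ℝ, |deriv (deriv F) x| ≤ L) (m x : ℝ) :
    F x - F m - deriv F m * (x - m) ≤ L / 2 * (x - m) ^ 2 := by
  rcases lt_trichotomy m x with h | h | h
  · exact quad_bound L F hF hF'' m x h
  · simp [h]
  · -- reflect: apply quad_bound to G t = F (-t)
    have hneg : ContDiff ℝ 2 (fun t : ℝ => -t) := (contDiff_neg).of_le le_top
    have hG : ContDiff ℝ 2 (fun t => F (-t)) := hF.comp hneg
    have hdG : deriv (fun t => F (-t)) = fun t => -deriv F (-t) := by
      funext t; exact deriv_comp_neg (f := F) t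
    have hdG2 : ∀ t, deriv (deriv (fun t => F (-t))) t = deriv (deriv F) (-t) := by
      intro t
      rw [hdG]
      have h1 : deriv (fun t : ℝ => -deriv F (-t)) t
          = -deriv (fun t : ℝ => deriv F (-t)) t := deriv.neg
      rw [h1, deriv_comp_neg (f := deriv F) t, neg_neg]
    have hG'' : ∀ t : ℝ, |deriv (deriv (fun t => F (-t))) t| ≤ L := by
      intro t; rw [hdG2]; exact hF'' (-t)
    have := quad_bound L (fun t => F (-t)) hG hG'' (-m) (-x) (by linarith)
    rw [hdG] at this
    simp only [neg_neg] at this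
    calc F x - F m - deriv F m * (x - m)
        = F x - F m - -deriv F m * (-x - -m) := by ring_nf
      _ ≤ L / 2 * (-x - -m) ^ 2 := this
      _ = L / 2 * (x - m) ^ 2 := by ring

theorem stmt_0 (L : ℝ) (hL : 0 ≤ L) (F : ℝ → ℝ) (hF : ContDiff ℝ 2 F)
    (hF'' : ∀ x : ℝ, |deriv (deriv F) x| ≤ L) (a b c : ℝ) :
    F a - F b - deriv F ((3/2) * b - (1/2) * c) * (a - b) ≤
      (L/4) * ((a - b)^2 + (a - 2*b + c)^2) + (L/4) * (b - c)^2 := by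
  have ha := quad_bound' L F hF hF'' ((3/2) * b - (1/2) * c) a
  have hG : ContDiff ℝ 2 (fun t => -(F t)) := hF.neg
  have hdG : deriv (fun t => -(F t)) = fun t => -(deriv F t) := by
    funext t; exact deriv.neg
  have hG'' : ∀ t : ℝ, |deriv (deriv (fun t => -(F t))) t| ≤ L := by
    intro t
    rw [hdG]
    have : deriv (fun t => -(deriv F t)) t = -(deriv (deriv F) t) := deriv.neg
    rw [this, abs_neg]
    exact hF'' t
  have hb := quad_bound' L (fun t => -(F t)) hG hG'' ((3/2) * b - (1/2) * c) b
  rw [hdG] at hb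
  simp only [] at hb
  nlinarith [mul_nonneg hL (sq_nonneg ((a-b) - (a - 2*b + c))), mul_nonneg hL (sq_nonneg (b - c))]
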